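/- arXiv:0711.2211 — 2 statements merged into one kernel-verified Lean document; each statement's English description precedes it below -/
import Mathlib

section
/- Let g₁₁, g₂₂ > 0, g₁₂ real with g₁₁g₂₂ − g₁₂² > 0, and let a, b, c be real with c ≠ 0. Then for all (ξ, η) ≠ (0,0), the quantity c⁴(g₂₂ξ² + g₁₁η² − 2g₁₂ξη)² + c²(a²+b²)(g₂₂ξ² + g₁₁η² − 3g₁₂ξη)² + (c²(a²+b²)g₁₂²/(g₁₁g₂₂))(g₁₁η² + g₂₂ξ² − g₁₂ξη)² is strictly positive. -/
theorem stmt_3 (g11 g22 g12 a b c ξ η : ℝ)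
    (hg11 : 0 < g11) (hg22 : 0 < g22) (hdet : 0 < g11 * g22 - g12 ^ 2)
    (hc : c ≠ 0) (hξη : (ξ, η) ≠ (0, 0)) :
    0 < c ^ 4 * (g22 * ξ ^ 2 + g11 * η ^ 2 - 2 * g12 * ξ * η) ^ 2
      + c ^ 2 * (a ^ 2 + b ^ 2) * (g22 * ξ ^ 2 + g11 * η ^ 2 - 3 * g12 * ξ * η) ^ 2
      + (c ^ 2 * (a ^ 2 + b ^ 2) * g12 ^ 2 / (g11 * g22))
          * (g11 * η ^ 2 + g22 * ξ ^ 2 - g12 * ξ * η) ^ 2 := by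
  have hne : ξ ≠ 0 ∨ η ≠ 0 := by
    by_contra h
    push_neg at h
    exact hξη (by simp [h.1, h.2])
  have hQ : 0 < g22 * ξ ^ 2 + g11 * η ^ 2 - 2 * g12 * ξ * η := by
    rcases hne with h | h
    · have hx : 0 < ξ ^ 2 := (pow_pos (abs_pos.mpr h) 2).trans_eq (sq_abs ξ)
      nlinarith [sq_nonneg (g11 * η - g12 * ξ), mul_pos hdet hx, hg11]
    · have hy : 0 < η ^ 2 := (pow_pos (abs_pos.mpr h) 2).trans_eq (sq_abs η)
      nlinarith [sq_nonneg (g22 * ξ - g12 * η), mul_pos hdet hy, hg22]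
  have h1 : 0 < c ^ 4 * (g22 * ξ ^ 2 + g11 * η ^ 2 - 2 * g12 * ξ * η) ^ 2 := by
    positivity
  have h2 : 0 ≤ c ^ 2 * (a ^ 2 + b ^ 2) * (g22 * ξ ^ 2 + g11 * η ^ 2 - 3 * g12 * ξ * η) ^ 2 := by
    positivity
  have h3 : 0 ≤ (c ^ 2 * (a ^ 2 + b ^ 2) * g12 ^ 2 / (g11 * g22))
      * (g11 * η ^ 2 + g22 * ξ ^ 2 - g12 * ξ * η) ^ 2 := by positivity
  linarith
end

section
/- Under the hypotheses of the previous frame computation, the Ricci curvature satisfies Ric(Je₁, e₂) = ½ Σ_A K(e₁, e₂, e_A, Je_A) = sin α (K₁₂₁₃ − K₁₂₂₄) + cos α (K₁₂₁₂ + K₁₂₃₄) = (1/cos α)(K₁₂₁₂ + K₁₂₃₄), provided cos α ≠ 0. -/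
open Real Matrix

theorem expand0 (K : MultilinearMap ℝ (fun _ : Fin 4 => (Fin 4 → ℝ)) ℝ)
    (a b : ℝ) (x y Y Z W : Fin 4 → ℝ) :
    K ![a • x + b • y, Y, Z, W] = a * K ![x, Y, Z, W] + b * K ![y, Y, Z, W] := by
  have h : ∀ v : Fin 4 → ℝ, (![v, Y, Z, W] : Fin 4 → Fin 4 → ℝ)
      = Function.update ![x, Y, Z, W] 0 v := by
    intro v; ext i j; fin_cases i <;> simp [Function.update]
  rw [h (a • x + b • y), MultilinearMap.map_update_add, MultilinearMap.map_update_smul,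
    MultilinearMap.map_update_smul, ← h x, ← h y, smul_eq_mul, smul_eq_mul]

theorem expand1 (K : MultilinearMap ℝ (fun _ : Fin 4 => (Fin 4 → ℝ)) ℝ)
    (a b : ℝ) (x y X Z W : Fin 4 → ℝ) :
    K ![X, a • x + b • y, Z, W] = a * K ![X, x, Z, W] + b * K ![X, y, Z, W] := by
  have h : ∀ v : Fin 4 → ℝ, (![X, v, Z, W] : Fin 4 → Fin 4 → ℝ)
      = Function.update ![X, x, Z, W] 1 v := by
    intro v; ext i j; fin_cases i <;> simp [Function.update]
  rw [h (a • x + b • y), MultilinearMap.map_update_add, MultilinearMap.map_update_smul,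
    MultilinearMap.map_update_smul, ← h x, ← h y, smul_eq_mul, smul_eq_mul]

theorem stmt_10 (α : ℝ) (hc : Real.cos α ≠ 0)
    (K : MultilinearMap ℝ (fun _ : Fin 4 => (Fin 4 → ℝ)) ℝ)
    (e : Fin 4 → (Fin 4 → ℝ)) (he : e = fun i => Pi.single i 1)
    (J : (Fin 4 → ℝ) →ₗ[ℝ] (Fin 4 → ℝ))
    (hJ0 : J (e 0) = Real.cos α • e 1 + Real.sin α • e 2)
    (hJ1 : J (e 1) = -(Real.cos α) • e 0 - Real.sin α • e 3)
    (hJ2 : J (e 2) = -(Real.sin α) • e 0 + Real.cos α • e 3)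
    (hJ3 : J (e 3) = Real.sin α • e 1 - Real.cos α • e 2)
    -- curvature tensor symmetries
    (hsym1 : ∀ X Y Z W : Fin 4 → ℝ, K ![X, Y, Z, W] = -K ![Y, X, Z, W])
    (hsym2 : ∀ X Y Z W : Fin 4 → ℝ, K ![X, Y, Z, W] = -K ![X, Y, W, Z])
    (hsym3 : ∀ X Y Z W : Fin 4 → ℝ, K ![X, Y, Z, W] = K ![Z, W, X, Y])
    -- first Bianchi identity
    (hbianchi : ∀ X Y Z W : Fin 4 → ℝ,
      K ![X, Y, Z, W] + K ![Y, Z, X, W] + K ![Z, X, Y, W] = 0)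
    -- J-invariance
    (hK : ∀ X Y Z W : Fin 4 → ℝ, K ![J X, J Y, Z, W] = K ![X, Y, Z, W])
    (Ric : (Fin 4 → ℝ) → (Fin 4 → ℝ) → ℝ)
    (hRic : ∀ X Y, Ric X Y = ∑ A : Fin 4, K ![X, e A, Y, e A]) :
    Ric (J (e 0)) (e 1)
        = Real.sin α * (K ![e 0, e 1, e 0, e 2] - K ![e 0, e 1, e 1, e 3])
          + Real.cos α * (K ![e 0, e 1, e 0, e 1] + K ![e 0, e 1, e 2, e 3]) ∧
    Ric (J (e 0)) (e 1)
        = (1 / Real.cos α) * (K ![e 0, e 1, e 0, e 1] + K ![e 0, e 1, e 2, e 3]) := by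
  -- canonicalization facts
  have c1 : K ![e 1, e 0, e 1, e 0] = K ![e 0, e 1, e 0, e 1] := by
    rw [hsym1 (e 1) (e 0), hsym2 (e 0) (e 1)]; ring
  have c2 : K ![e 2, e 0, e 1, e 0] = K ![e 0, e 1, e 0, e 2] := by
    rw [hsym1 (e 2) (e 0), hsym2 (e 0) (e 2), hsym3 (e 0) (e 2)]; ring
  have z1 : K ![e 1, e 1, e 1, e 1] = 0 := by
    have := hsym1 (e 1) (e 1) (e 1) (e 1); linarith
  have z2 : K ![e 2, e 1, e 1, e 1] = 0 := by
    have := hsym2 (e 2) (e 1) (e 1) (e 1); linarith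
  have z3 : K ![e 2, e 2, e 1, e 2] = 0 := by
    have := hsym1 (e 2) (e 2) (e 1) (e 2); linarith
  have z4 : K ![e 1, e 1, e 1, e 2] = 0 := by
    have := hsym1 (e 1) (e 1) (e 1) (e 2); linarith
  have c3 : K ![e 2, e 3, e 1, e 3] = K ![e 1, e 3, e 2, e 3] := hsym3 _ _ _ _
  have c4 : K ![e 1, e 0, e 0, e 1] = -K ![e 0, e 1, e 0, e 1] := hsym1 _ _ _ _
  have c5 : K ![e 1, e 3, e 0, e 1] = K ![e 0, e 1, e 1, e 3] := hsym3 _ _ _ _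
  have c6 : K ![e 2, e 0, e 0, e 1] = -K ![e 0, e 1, e 0, e 2] := by
    rw [hsym1 (e 2) (e 0), hsym3 (e 0) (e 2)]
  have c7 : K ![e 2, e 3, e 0, e 1] = K ![e 0, e 1, e 2, e 3] := hsym3 _ _ _ _
  have c8 : K ![e 0, e 2, e 0, e 1] = K ![e 0, e 1, e 0, e 2] := hsym3 _ _ _ _
  have c9 : K ![e 1, e 0, e 1, e 3] = -K ![e 0, e 1, e 1, e 3] := hsym1 _ _ _ _
  have c10 : K ![e 2, e 0, e 1, e 3] = -K ![e 0, e 2, e 1, e 3] := hsym1 _ _ _ _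
  have c11 : K ![e 2, e 1, e 1, e 2] = -K ![e 1, e 2, e 1, e 2] := hsym1 _ _ _ _
  have c12 : K ![e 1, e 2, e 0, e 3] = K ![e 0, e 3, e 1, e 2] := hsym3 _ _ _ _
  -- Ricci expansion
  have hR := hRic (J (e 0)) (e 1)
  conv at hR => rhs; rw [Fin.sum_univ_four, hJ0]
  simp only [expand0] at hR
  rw [c1, c2, z1, z2, z3, c3] at hR
  -- J-invariance instances
  have t1 := hK (e 0) (e 2) (e 0) (e 1)
  rw [hJ0, hJ2] at t1
  rw [expand0] at t1
  simp only [expand1] at t1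
  rw [c4, c5, c6, c7, c8] at t1
  have t2 := hK (e 0) (e 2) (e 1) (e 3)
  rw [hJ0, hJ2] at t2
  rw [expand0] at t2
  simp only [expand1] at t2
  rw [c9, c10, c3] at t2
  have hJ3' : J (e 3) = Real.sin α • e 1 + (-(Real.cos α)) • e 2 := by
    rw [hJ3, sub_eq_add_neg, ← neg_smul]
  have t3 := hK (e 0) (e 3) (e 1) (e 2)
  rw [hJ0, hJ3'] at t3
  rw [expand0] at t3
  simp only [expand1] at t3
  rw [z4, z3, c11] at t3
  -- Bianchi instance
  have hBi := hbianchi (e 0) (e 1) (e 2) (e 3)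
  rw [c12, c10] at hBi
  have hP := Real.sin_sq_add_cos_sq α
  -- key identity (Lemma 3.2 style)
  have keymul : Real.cos α * (Real.sin α * (K ![e 0, e 1, e 0, e 1] + K ![e 0, e 1, e 2, e 3]))
      = Real.cos α * (Real.cos α * (K ![e 0, e 1, e 0, e 2] - K ![e 0, e 1, e 1, e 3])) := by
    linear_combination t1 - K ![e 0, e 1, e 0, e 2] * hP
  have key := mul_left_cancel₀ hc keymul
  -- part 1
  have h1mul : Real.cos α * Ric (J (e 0)) (e 1)
      = Real.cos α * (Real.sin α * (K ![e 0, e 1, e 0, e 2] - K ![e 0, e 1, e 1, e 3])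
          + Real.cos α * (K ![e 0, e 1, e 0, e 1] + K ![e 0, e 1, e 2, e 3])) := by
    linear_combination Real.cos α * hR + t2 - (Real.cos α)^2 * hBi - (Real.cos α)^2 * t3
      + (-((Real.cos α)^2) * K ![e 1, e 2, e 1, e 2] - K ![e 0, e 2, e 1, e 3]) * hP
  have h1 := mul_left_cancel₀ hc h1mul
  refine ⟨h1, ?_⟩
  have h2 : Real.cos α * Ric (J (e 0)) (e 1)
      = K ![e 0, e 1, e 0, e 1] + K ![e 0, e 1, e 2, e 3] := by
    linear_combination Real.cos α * h1 - Real.sin α * key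
      + (K ![e 0, e 1, e 0, e 1] + K ![e 0, e 1, e 2, e 3]) * hP
  field_simp
  linear_combination h2
end
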